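/- arXiv:2507.06557 — 2 statements merged into one kernel-verified Lean document; each statement's English description precedes it below -/
import Mathlib

section
/- Let m ≥ 1 be an integer and a ∈ (0, 1/5]. Then for every real x ≥ 5^(1+1/m) * a^(-1/m) * (log(1/a))^(1+1/m), one has (log x + 1)^(m+1) / x^m ≤ a. -/
set_option maxHeartbeats 1000000 in
theorem stmt_3 (m : ℕ) (hm : 1 ≤ m) (a : ℝ) (ha : 0 < a) (ha' : a ≤ 1 / 5) :
    ∀ x : ℝ,
      (5 : ℝ) ^ (1 + 1 / (m : ℝ)) * a ^ (-(1 / (m : ℝ))) *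
          (Real.log (1 / a)) ^ (1 + 1 / (m : ℝ)) ≤ x →
      (Real.log x + 1) ^ (m + 1) / x ^ m ≤ a := by
  intro x hx
  have hm' : (1:ℝ) ≤ (m:ℝ) := by exact_mod_cast hm
  have hmpos : (0:ℝ) < (m:ℝ) := by linarith
  set L : ℝ := Real.log (1/a) with hLdef
  set e : ℝ := 1 + 1/(m:ℝ) with hedef
  have hinvpos : 0 < 1/(m:ℝ) := by positivity
  have he1 : (1:ℝ) ≤ e := by rw [hedef]; linarith
  have hepos : 0 < e := by linarith
  have hlog5 : (1:ℝ) < Real.log 5 := by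
    rw [show (1:ℝ) = Real.log (Real.exp 1) by simp]
    apply Real.log_lt_log (Real.exp_pos 1)
    have := Real.exp_one_lt_d9
    linarith
  have hL5 : Real.log 5 ≤ L := by
    rw [hLdef]
    apply Real.log_le_log (by norm_num)
    rw [le_div_iff₀ ha]; linarith
  have hL1 : (1:ℝ) < L := lt_of_lt_of_le hlog5 hL5
  have hLpos : (0:ℝ) < L := by linarith
  set x₀ : ℝ := (5 : ℝ) ^ e * a ^ (-(1 / (m : ℝ))) * L ^ e with hx0def
  have hx0pos : 0 < x₀ :=
    mul_pos (mul_pos (Real.rpow_pos_of_pos (by norm_num) _) (Real.rpow_pos_of_pos ha _))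
      (Real.rpow_pos_of_pos hLpos _)
  have hx0one : 1 ≤ x₀ := by
    have h1 : (1:ℝ) ≤ (5:ℝ) ^ e := Real.one_le_rpow (by norm_num) (le_of_lt hepos)
    have h2 : (1:ℝ) ≤ a ^ (-(1 / (m : ℝ))) := by
      apply le_of_lt
      rw [Real.one_lt_rpow_iff_of_pos ha]
      right
      exact ⟨by linarith, by linarith⟩
    have h3 : (1:ℝ) ≤ L ^ e := Real.one_le_rpow (le_of_lt hL1) (le_of_lt hepos)
    have h12 : (1:ℝ) ≤ (5:ℝ) ^ e * a ^ (-(1 / (m : ℝ))) :=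
      le_trans h1 (le_mul_of_one_le_right (by positivity) h2)
    exact le_trans h12 (le_mul_of_one_le_right (by positivity) h3)
  have hxone : 1 ≤ x := le_trans hx0one hx
  have hxpos : 0 < x := by linarith
  -- key: a * x₀^m = (5*L)^(m+1)
  have hrpow_pow : ∀ c : ℝ, 0 < c → (c ^ e) ^ m = c ^ (m+1) := by
    intro c hc
    rw [← Real.rpow_natCast (c ^ e) m, ← Real.rpow_mul hc.le, ← Real.rpow_natCast c (m+1)]
    congr 1
    rw [hedef]
    push_cast
    field_simp
  have ha_pow : (a ^ (-(1 / (m : ℝ)))) ^ m = a⁻¹ := by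
    rw [← Real.rpow_natCast (a ^ _) m, ← Real.rpow_mul ha.le]
    rw [show (-(1 / (m : ℝ))) * m = -1 by field_simp]
    rw [Real.rpow_neg_one]
  have hkey : a * x₀ ^ m = (5*L) ^ (m+1) := by
    rw [hx0def, mul_pow, mul_pow, hrpow_pow 5 (by norm_num), hrpow_pow L hLpos, ha_pow,
      mul_pow]
    field_simp
  -- set t
  set t : ℝ := x / x₀ with htdef
  have ht1 : 1 ≤ t := (one_le_div hx0pos).2 hx
  have htpos : 0 < t := by linarith
  have hxt : x = x₀ * t := by rw [htdef, mul_div_assoc', mul_div_cancel_left₀ _ hx0pos.ne']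
  have hlogx : Real.log x = Real.log x₀ + Real.log t := by
    rw [hxt, Real.log_mul (by linarith) (by linarith)]
  -- bound log x₀ + 1
  have hlogx0 : Real.log x₀ + 1 ≤ 5*L - 1 := by
    have h0 : Real.log x₀ = e * Real.log 5 + (-(1/(m:ℝ))) * Real.log a + e * Real.log L := by
      rw [hx0def, Real.log_mul (by positivity) (by positivity),
        Real.log_mul (by positivity) (by positivity),
        Real.log_rpow (by norm_num), Real.log_rpow ha, Real.log_rpow hLpos]
    have hLa : Real.log a = -L := by rw [hLdef, one_div, Real.log_inv]; ring
    have hinv : 1/(m:ℝ) ≤ 1 := by rw [div_le_one hmpos]; exact hm'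
    have hlogL : Real.log L ≤ L - 1 := Real.log_le_sub_one_of_pos hLpos
    have hlogLpos : 0 ≤ Real.log L := Real.log_nonneg (le_of_lt hL1)
    have hlog5pos : (0:ℝ) ≤ Real.log 5 := by linarith
    have he2 : e ≤ 2 := by rw [hedef]; linarith
    rw [h0, hLa]
    nlinarith [mul_le_mul_of_nonneg_right he2 hlog5pos, mul_le_mul_of_nonneg_right he2 hlogLpos,
      mul_le_mul_of_nonneg_left hL5 (by linarith : (0:ℝ) ≤ e)]
  -- main pointwise bound
  have hlogt : 0 ≤ Real.log t := Real.log_nonneg ht1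
  have hsqrt : 1 + (1/2) * Real.log t ≤ Real.sqrt t := by
    have h1 : Real.log (Real.sqrt t) ≤ Real.sqrt t - 1 :=
      Real.log_le_sub_one_of_pos (Real.sqrt_pos.2 htpos)
    rw [Real.log_sqrt htpos.le] at h1
    linarith
  have hsqrt_le : Real.sqrt t ≤ t ^ ((m:ℝ)/((m:ℝ)+1)) := by
    rw [Real.sqrt_eq_rpow]
    apply Real.rpow_le_rpow_of_exponent_le ht1
    rw [div_le_div_iff₀ (by norm_num) (by linarith)]
    linarith
  have hmain : Real.log x + 1 ≤ 5*L * t ^ ((m:ℝ)/((m:ℝ)+1)) := by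
    have h1 : Real.log x + 1 ≤ 5*L - 1 + Real.log t := by rw [hlogx]; linarith
    have h2 : 5*L - 1 + Real.log t ≤ 5*L * (1 + (1/2)*Real.log t) := by nlinarith
    have h3 : 5*L * (1 + (1/2)*Real.log t) ≤ 5*L * Real.sqrt t :=
      mul_le_mul_of_nonneg_left hsqrt (by linarith)
    have h4 : 5*L * Real.sqrt t ≤ 5*L * t ^ ((m:ℝ)/((m:ℝ)+1)) :=
      mul_le_mul_of_nonneg_left hsqrt_le (by linarith)
    linarith
  have hlogx_nonneg : 0 ≤ Real.log x + 1 := by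
    have := Real.log_nonneg hxone; linarith
  have hpow : (Real.log x + 1) ^ (m+1) ≤ (5*L * t ^ ((m:ℝ)/((m:ℝ)+1))) ^ (m+1) :=
    pow_le_pow_left₀ hlogx_nonneg hmain _
  have htpow : (t ^ ((m:ℝ)/((m:ℝ)+1))) ^ (m+1) = t ^ m := by
    rw [← Real.rpow_natCast (t ^ ((m:ℝ)/((m:ℝ)+1))) (m+1), ← Real.rpow_mul htpos.le,
      ← Real.rpow_natCast t m]
    congr 1
    push_cast
    field_simp
  have hxm : a * x ^ m = (5*L) ^ (m+1) * t ^ m := by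
    rw [hxt, mul_pow, ← hkey]; ring
  have hrhs : (5*L * t ^ ((m:ℝ)/((m:ℝ)+1))) ^ (m+1) = a * x ^ m := by
    rw [mul_pow, htpow, hxm]
  rw [div_le_iff₀ (by positivity)]
  calc (Real.log x + 1) ^ (m+1) ≤ (5*L * t ^ ((m:ℝ)/((m:ℝ)+1))) ^ (m+1) := hpow
    _ = a * x ^ m := hrhs
end

section
/- Let c ≥ 1, g > 0, k ≥ 1, N ≥ 1 be reals, p ≥ 1, m ≥ 1 integers, and ε ∈ (0,1) with p_0 = ⌈log(3N/ε)⌉. Suppose α_q ≤ (q-1)! (2kg)^(q-1) N g for all integers q ≥ 2. Then for all integers q ≥ m+1, n ≥ 1, the sum Σ over tuples (q_1,...,q_n) with p+1 ≤ q_i ≤ p_0 and q_1+...+q_n = q+n-1 of ∏_{i=1}^n α_{q_i} is at most (4 * max((p+1) N^(1/(p+1)), e^3 p_0) * k * g)^(q+n-1). -/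
theorem two_pow_sum (t : ℕ) : ∑ i ∈ Finset.range t, 2 ^ i < 2 ^ t := by
  induction t with
  | zero => simp
  | succ t ih => rw [Finset.sum_range_succ, pow_succ]; omega

theorem aux_len : ∀ k n : ℕ, (List.Nat.antidiagonalTuple k n).length ≤ 2 ^ (k + n) := by
  intro k
  induction k with
  | zero => intro n; cases n <;> simp [List.Nat.antidiagonalTuple]
  | succ k ih =>
    intro n
    rw [show List.Nat.antidiagonalTuple (k+1) n =
      (List.Nat.antidiagonal n).flatMap (fun ni : ℕ × ℕ =>
        (List.Nat.antidiagonalTuple k ni.2).map fun x : Fin k → ℕ =>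
          (Fin.cons ni.1 x : Fin (k+1) → ℕ)) from rfl,
      List.length_flatMap]
    have h1 : (List.map (fun ni : ℕ × ℕ => ((List.Nat.antidiagonalTuple k ni.2).map
        (fun x : Fin k → ℕ => (Fin.cons ni.1 x : Fin (k+1) → ℕ))).length)
          (List.Nat.antidiagonal n)).sum
        = ∑ ni ∈ Finset.HasAntidiagonal.antidiagonal n,
          ((List.Nat.antidiagonalTuple k ni.2).map
            (fun x : Fin k → ℕ => (Fin.cons ni.1 x : Fin (k+1) → ℕ))).length := rfl
    rw [h1]
    simp only [List.length_map]
    calc ∑ ni ∈ Finset.HasAntidiagonal.antidiagonal n, (List.Nat.antidiagonalTuple k ni.2).length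
        ≤ ∑ ni ∈ Finset.HasAntidiagonal.antidiagonal n, 2 ^ (k + ni.2) :=
          Finset.sum_le_sum (fun x _ => ih x.2)
      _ = ∑ i ∈ Finset.range (n+1), 2 ^ (k + (n - i)) := by
          rw [Finset.Nat.sum_antidiagonal_eq_sum_range_succ_mk]
      _ ≤ ∑ i ∈ Finset.range (n+1), 2 ^ (k + i) := by
          rw [← Finset.sum_range_reflect (fun i => 2 ^ (k + i)) (n+1)]
          apply le_of_eq
          apply Finset.sum_congr rfl
          intro i hi
          simp only [Finset.mem_range] at hi
          congr 2
      _ = 2 ^ k * ∑ i ∈ Finset.range (n+1), 2 ^ i := by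
          rw [Finset.mul_sum]; simp [pow_add]
      _ ≤ 2 ^ k * 2 ^ (n+1) := Nat.mul_le_mul_left _ (two_pow_sum (n+1)).le
      _ = 2 ^ (k + 1 + n) := by ring

theorem aux_card (n s : ℕ) : (Finset.Nat.antidiagonalTuple n s).card ≤ 2 ^ (n + s) :=
  aux_len n s

-- Lemma A: t * N^(1/t) ≤ max (a * N^(1/a)) (e^3 * P) for a ≤ t ≤ P, P ≥ log N
theorem auxA (N : ℝ) (hN : 1 ≤ N) (a t P : ℝ) (ha : 1 ≤ a) (hat : a ≤ t) (htP : t ≤ P) :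
    t * N ^ (1 / t) ≤ max (a * N ^ (1 / a)) (Real.exp 3 * P) := by
  have hN0 : (0:ℝ) < N := by linarith
  have ha0 : (0:ℝ) < a := by linarith
  have ht0 : (0:ℝ) < t := by linarith
  have hlogN : 0 ≤ Real.log N := Real.log_nonneg hN
  have hrt : N ^ (1 / t) = Real.exp (Real.log N / t) := by
    rw [Real.rpow_def_of_pos hN0]; ring_nf
  by_cases hc : Real.log N ≤ t
  · -- t * N^(1/t) ≤ e^3 * P
    refine le_trans ?_ (le_max_right _ _)
    have h1 : N ^ (1 / t) ≤ Real.exp 3 := by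
      rw [hrt, Real.exp_le_exp]
      have : Real.log N / t ≤ 1 := by
        rw [div_le_one ht0]; exact hc
      linarith
    calc t * N ^ (1/t) ≤ t * Real.exp 3 := by
          apply mul_le_mul_of_nonneg_left h1 ht0.le
      _ ≤ P * Real.exp 3 := by
          apply mul_le_mul_of_nonneg_right htP (Real.exp_nonneg 3)
      _ = Real.exp 3 * P := by ring
  · -- t < log N, decreasing case
    push_neg at hc
    refine le_trans ?_ (le_max_left _ _)
    set c := Real.log N with hcdef
    have hct : t ≤ c := hc.le
    have h1 : Real.log (t / a) ≤ t / a - 1 := Real.log_le_sub_one_of_pos (by positivity)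
    have h2 : Real.log t - Real.log a ≤ (t - a) / a := by
      rw [← Real.log_div ht0.ne' ha0.ne'] at *
      have : t / a - 1 = (t - a) / a := by field_simp
      linarith [h1, this ▸ h1]
    have h3 : (t - a) / a ≤ c / a - c / t := by
      have he : c / a - c / t = c * (t - a) / (a * t) := by field_simp
      have he2 : (t - a) / a = t * (t - a) / (a * t) := by
        field_simp
      rw [he, he2]
      rw [div_le_div_iff_of_pos_right (by positivity)]
      exact mul_le_mul_of_nonneg_right hct (by linarith)
    have key : Real.log t + c / t ≤ Real.log a + c / a := by linarith
    have hexp : t * N ^ (1 / t) = Real.exp (Real.log t + c / t) := by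
      rw [hrt, Real.exp_add, Real.exp_log ht0]
    have hexp2 : a * N ^ (1 / a) = Real.exp (Real.log a + c / a) := by
      rw [Real.rpow_def_of_pos hN0, Real.exp_add, Real.exp_log ha0]
      ring_nf
      rw [hcdef, mul_comm a⁻¹]
    rw [hexp, hexp2]
    exact Real.exp_le_exp.2 key

theorem auxB (g k N : ℝ) (hg : 0 < g) (hk : 1 ≤ k) (hN : 1 ≤ N)
    (α : ℕ → ℝ)
    (hbound : ∀ q : ℕ, 2 ≤ q →
      α q ≤ (Nat.factorial (q - 1) : ℝ) * (2 * k * g) ^ (q - 1) * N * g)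
    (q : ℕ) (hq : 2 ≤ q) :
    α q ≤ (1/2) * (2 * ((q:ℝ) * N ^ (1 / (q:ℝ))) * k * g) ^ q := by
  have hN0 : (0:ℝ) < N := by linarith
  have hk0 : (0:ℝ) < k := by linarith
  set t : ℝ := (q:ℝ) with htdef
  have ht2 : (2:ℝ) ≤ t := by rw [htdef]; exact_mod_cast hq
  have ht0 : (0:ℝ) < t := by linarith
  set r : ℝ := N ^ (1 / t) with hrdef
  have hr0 : (0:ℝ) < r := Real.rpow_pos_of_pos hN0 _
  have hrN : r ^ q = N := by
    rw [hrdef, ← Real.rpow_natCast (N ^ (1/t)) q, ← Real.rpow_mul hN0.le]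
    rw [← htdef, one_div, inv_mul_cancel₀ ht0.ne', Real.rpow_one]
  obtain ⟨e, rfl⟩ : ∃ e, q = e + 1 := ⟨q - 1, by omega⟩
  have hfact : ((e + 1 - 1).factorial : ℝ) ≤ t ^ e := by
    have h1 : (e).factorial ≤ e ^ e := Nat.factorial_le_pow e
    have h2 : (e:ℝ) ^ e ≤ t ^ e := by
      apply pow_le_pow_left₀ (by positivity)
      rw [htdef]; exact_mod_cast Nat.le_succ e
    calc ((e + 1 - 1).factorial : ℝ) = ((e).factorial : ℝ) := by norm_num
      _ ≤ (e:ℝ) ^ e := by exact_mod_cast h1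
      _ ≤ t ^ e := h2
  calc α (e + 1) ≤ ((e + 1 - 1).factorial : ℝ) * (2 * k * g) ^ (e + 1 - 1) * N * g :=
        hbound _ hq
    _ ≤ t ^ e * (2 * k * g) ^ e * N * g := by
        have : (2 * k * g) ^ (e + 1 - 1) = (2 * k * g) ^ e := by norm_num
        rw [this]
        have h20 : (0:ℝ) ≤ (2 * k * g) ^ e := by positivity
        have := mul_le_mul_of_nonneg_right hfact h20
        nlinarith [mul_le_mul_of_nonneg_right
          (mul_le_mul_of_nonneg_right hfact h20) hN0.le, hg.le, hN0.le]
    _ ≤ (t * k) * (t ^ e * (2 * k * g) ^ e * N * g) := by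
        have h1 : (1:ℝ) ≤ t * k := by nlinarith
        have h2 : (0:ℝ) ≤ t ^ e * (2 * k * g) ^ e * N * g := by positivity
        nlinarith
    _ = (1/2) * (2 * (t * r) * k * g) ^ (e + 1) := by
        rw [← hrN]
        ring

theorem stmt_7 (c g k N ε : ℝ) (hc : 1 ≤ c) (hg : 0 < g) (hk : 1 ≤ k) (hN : 1 ≤ N)
    (hε : ε ∈ Set.Ioo (0 : ℝ) 1) (p m : ℕ) (hp : 1 ≤ p) (hm : 1 ≤ m)
    (α : ℕ → ℝ) (hα : ∀ q, 0 ≤ α q)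
    (hbound : ∀ q : ℕ, 2 ≤ q →
      α q ≤ (Nat.factorial (q - 1) : ℝ) * (2 * k * g) ^ (q - 1) * N * g) :
    ∀ q n : ℕ, m + 1 ≤ q → 1 ≤ n →
      ∑ f ∈ (Finset.Nat.antidiagonalTuple n (q + n - 1)).filter
          (fun f => ∀ i, p + 1 ≤ f i ∧ f i ≤ ⌈Real.log (3 * N / ε)⌉₊),
        ∏ i, α (f i)
      ≤ (4 * max (((p : ℝ) + 1) * N ^ (1 / ((p : ℝ) + 1)))
            (Real.exp 3 * (⌈Real.log (3 * N / ε)⌉₊ : ℝ)) * k * g) ^ (q + n - 1) := by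
  intro q n hq hn
  have hN0 : (0:ℝ) < N := by linarith
  set p₀ : ℕ := ⌈Real.log (3 * N / ε)⌉₊ with hp₀
  set M : ℝ := max (((p : ℝ) + 1) * N ^ (1 / ((p : ℝ) + 1))) (Real.exp 3 * (p₀ : ℝ))
    with hMdef
  set s : ℕ := q + n - 1 with hsdef
  have hM0 : (0:ℝ) < M := by
    have : (0:ℝ) < ((p : ℝ) + 1) * N ^ (1 / ((p : ℝ) + 1)) := by positivity
    exact lt_of_lt_of_le this (le_max_left _ _)
  have hMb0 : (0:ℝ) < 2 * M * k * g := by positivity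
  -- per-element bound
  have key : ∀ f ∈ (Finset.Nat.antidiagonalTuple n s).filter
      (fun f => ∀ i, p + 1 ≤ f i ∧ f i ≤ p₀),
      ∏ i, α (f i) ≤ (1/2 : ℝ)^n * (2 * M * k * g) ^ s := by
    intro f hf
    rw [Finset.mem_filter, Finset.Nat.mem_antidiagonalTuple] at hf
    obtain ⟨hsum, hcond⟩ := hf
    calc ∏ i, α (f i) ≤ ∏ i, ((1/2 : ℝ) * (2 * M * k * g) ^ (f i)) := by
          apply Finset.prod_le_prod (fun i _ => hα _)
          intro i _
          obtain ⟨h1, h2⟩ := hcond i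
          have hq2 : 2 ≤ f i := by omega
          refine (auxB g k N hg hk hN α hbound (f i) hq2).trans ?_
          have hA : ((f i : ℝ)) * N ^ (1 / (f i : ℝ)) ≤ M := by
            rw [hMdef]
            apply auxA N hN ((p:ℝ)+1) ((f i : ℝ)) ((p₀ : ℝ))
            · have : (1:ℝ) ≤ (p:ℝ) := by exact_mod_cast hp
              linarith
            · exact_mod_cast h1
            · exact_mod_cast h2
          have hbase : (0:ℝ) ≤ 2 * ((f i : ℝ) * N ^ (1 / (f i : ℝ))) * k * g := by
            positivity
          gcongr
      _ = (1/2 : ℝ)^n * (2 * M * k * g) ^ (∑ i, f i) := by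
          rw [Finset.prod_mul_distrib, Finset.prod_const, Finset.prod_pow_eq_pow_sum,
            Finset.card_univ, Fintype.card_fin]
      _ = (1/2 : ℝ)^n * (2 * M * k * g) ^ s := by rw [hsum]
  have hb0 : (0:ℝ) ≤ (1/2 : ℝ)^n * (2 * M * k * g) ^ s := by positivity
  calc ∑ f ∈ (Finset.Nat.antidiagonalTuple n s).filter
        (fun f => ∀ i, p + 1 ≤ f i ∧ f i ≤ p₀), ∏ i, α (f i)
      ≤ ((Finset.Nat.antidiagonalTuple n s).filter
          (fun f => ∀ i, p + 1 ≤ f i ∧ f i ≤ p₀)).card •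
          ((1/2 : ℝ)^n * (2 * M * k * g) ^ s) := Finset.sum_le_card_nsmul _ _ _ key
    _ ≤ (2 ^ (n + s) : ℕ) * ((1/2 : ℝ)^n * (2 * M * k * g) ^ s) := by
        rw [nsmul_eq_mul]
        apply mul_le_mul_of_nonneg_right _ hb0
        have hcard : ((Finset.Nat.antidiagonalTuple n s).filter
            (fun f => ∀ i, p + 1 ≤ f i ∧ f i ≤ p₀)).card ≤ 2 ^ (n + s) :=
          le_trans (Finset.card_filter_le _ _) (aux_card n s)
        exact_mod_cast hcard
    _ = (2^n * (1/2 : ℝ)^n) * ((2:ℝ)^s * (2 * M * k * g)^s) := by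
        push_cast
        rw [pow_add]; ring
    _ = (2 * (2 * M * k * g)) ^ s := by
        rw [show ((2:ℝ)^n * ((1:ℝ)/2)^n) = 1 from by rw [← mul_pow]; norm_num, one_mul,
          ← mul_pow]
    _ = (4 * M * k * g) ^ s := by ring_nf
end
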